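/- arXiv:1711.06927 — 3 statements merged into one kernel-verified Lean document; each statement's English description precedes it below -/
import Mathlib

section
/- Let k, h ≥ 2 be integers and d > 0 a real number. Define f : ℝ^k × ℝ^h → ℝ by f(x,y) = (1/4)(u − v)u^d, where u = (h−1)|x|^2 and v = (k−1)|y|^2. Then at every point (x,y) with x ≠ 0 at which ∇f ≠ 0, writing g = ∇f/|∇f|, one has |∇f|^3 · div g = ((h−1)(k−1)/8) · u^{3d−2} (u − v) [ (1+d)^2 (d(h−1) − 1) u^2 + d( k − 2 + d(1 + 2d − 2(1+d)h) ) u v + d^3 (h−1) v^2 ]. -/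
open MeasureTheory
open scoped RealInnerProductSpace ENNReal

noncomputable section

/-- Euclidean norm of the first (`ℝ^k`) component of `z = (x, y)`. -/
def nX (k h : ℕ) (z : EuclideanSpace ℝ (Fin (k + h))) : ℝ :=
  Real.sqrt (∑ i : Fin k, (z (Fin.castAdd h i)) ^ 2)

/-- Euclidean norm of the second (`ℝ^h`) component of `z = (x, y)`. -/
def nY (k h : ℕ) (z : EuclideanSpace ℝ (Fin (k + h))) : ℝ :=
  Real.sqrt (∑ j : Fin h, (z (Fin.natAdd k j)) ^ 2)

/-- The Lawson cone `M_{kh}`. -/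
def Mset (k h : ℕ) : Set (EuclideanSpace ℝ (Fin (k + h))) :=
  {z | nX k h z / Real.sqrt ((k : ℝ) - 1) = nY k h z / Real.sqrt ((h : ℝ) - 1)}

/-- The open region `K_{kh}` bounded by the Lawson cone. -/
def Kset (k h : ℕ) : Set (EuclideanSpace ℝ (Fin (k + h))) :=
  {z | nX k h z / Real.sqrt ((k : ℝ) - 1) < nY k h z / Real.sqrt ((h : ℝ) - 1)}

/-- The cylinder `H_R = B_R^k × B_R^h`. -/
def Hset (k h : ℕ) (R : ℝ) : Set (EuclideanSpace ℝ (Fin (k + h))) :=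
  {z | nX k h z < R ∧ nY k h z < R}

/-- The exceptional set `S` of pairs. -/
def S : Set (ℕ × ℕ) := {(3, 5), (2, 7), (2, 8), (2, 9), (2, 10), (2, 11)}

/-- Divergence of a vector field, as the trace of its derivative
(equivalently `∑ i, ∂ᵢ gᵢ`). -/
def divg {n : ℕ} (g : EuclideanSpace ℝ (Fin n) → EuclideanSpace ℝ (Fin n))
    (z : EuclideanSpace ℝ (Fin n)) : ℝ :=
  LinearMap.trace ℝ _ (fderiv ℝ g z).toLinearMap

/-- `u = (h-1)|x|^2`. -/
def uG (k h : ℕ) (z : EuclideanSpace ℝ (Fin (k + h))) : ℝ := ((h : ℝ) - 1) * nX k h z ^ 2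

/-- `v = (k-1)|y|^2`. -/
def vG (k h : ℕ) (z : EuclideanSpace ℝ (Fin (k + h))) : ℝ := ((k : ℝ) - 1) * nY k h z ^ 2

/-- `f(x,y) = (1/4)(u - v)u^d`. -/
def fU (k h : ℕ) (d : ℝ) (z : EuclideanSpace ℝ (Fin (k + h))) : ℝ :=
  (1 / 4) * (uG k h z - vG k h z) * uG k h z ^ d

namespace LawsonAux

abbrev E (n : ℕ) := EuclideanSpace ℝ (Fin n)

def sS (k h : ℕ) (z : E (k+h)) : ℝ := ∑ i : Fin k, (z (Fin.castAdd h i))^2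
def sT (k h : ℕ) (z : E (k+h)) : ℝ := ∑ j : Fin h, (z (Fin.natAdd k j))^2

lemma sS_nonneg (k h : ℕ) (z : E (k+h)) : 0 ≤ sS k h z :=
  Finset.sum_nonneg fun i _ => sq_nonneg _
lemma sT_nonneg (k h : ℕ) (z : E (k+h)) : 0 ≤ sT k h z :=
  Finset.sum_nonneg fun i _ => sq_nonneg _
lemma nX_sq (k h : ℕ) (z : E (k+h)) : nX k h z ^ 2 = sS k h z :=
  Real.sq_sqrt (sS_nonneg k h z)
lemma nY_sq (k h : ℕ) (z : E (k+h)) : nY k h z ^ 2 = sT k h z :=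
  Real.sq_sqrt (sT_nonneg k h z)

lemma sS_hasFDerivAt (k h : ℕ) (z : E (k+h)) :
    ∃ L : E (k+h) →L[ℝ] ℝ, HasFDerivAt (sS k h) L z ∧
      ∀ y : E (k+h), L y = ∑ i : Fin k, 2 * z (Fin.castAdd h i) * y (Fin.castAdd h i) := by
  refine ⟨_, HasFDerivAt.fun_sum (u := Finset.univ)
    (A := fun (i : Fin k) (w : E (k+h)) => (w (Fin.castAdd h i))^2)
    (A' := fun i => (2 * z (Fin.castAdd h i)) • EuclideanSpace.proj (Fin.castAdd h i))
    (fun i _ => ?_), ?_⟩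
  · have hp := (EuclideanSpace.proj (𝕜 := ℝ) (Fin.castAdd h i)).hasFDerivAt (x := z)
    have := hp.fun_mul hp
    simpa [pow_two, two_mul, add_smul] using this
  · intro y
    simp [Finset.mul_sum]

lemma sT_hasFDerivAt (k h : ℕ) (z : E (k+h)) :
    ∃ L : E (k+h) →L[ℝ] ℝ, HasFDerivAt (sT k h) L z ∧
      ∀ y : E (k+h), L y = ∑ j : Fin h, 2 * z (Fin.natAdd k j) * y (Fin.natAdd k j) := by
  refine ⟨_, HasFDerivAt.fun_sum (u := Finset.univ)
    (A := fun (j : Fin h) (w : E (k+h)) => (w (Fin.natAdd k j))^2)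
    (A' := fun j => (2 * z (Fin.natAdd k j)) • EuclideanSpace.proj (Fin.natAdd k j))
    (fun j _ => ?_), ?_⟩
  · have hp := (EuclideanSpace.proj (𝕜 := ℝ) (Fin.natAdd k j)).hasFDerivAt (x := z)
    have := hp.fun_mul hp
    simpa [pow_two, two_mul, add_smul] using this
  · intro y
    simp [Finset.mul_sum]

lemma trace_clm {n : ℕ} (L : E n →L[ℝ] E n) :
    LinearMap.trace ℝ _ L.toLinearMap = ∑ i, L (EuclideanSpace.single i 1) i := by
  rw [LinearMap.trace_eq_matrix_trace ℝ (EuclideanSpace.basisFun (Fin n) ℝ).toBasis, Matrix.trace]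
  simp [Matrix.diag, LinearMap.toMatrix_apply, EuclideanSpace.basisFun_repr,
    OrthonormalBasis.coe_toBasis, EuclideanSpace.basisFun_apply]

lemma sum_single_x {k h : ℕ} (z : E (k+h)) (j : Fin (k+h)) :
    (∑ i : Fin k, 2 * z (Fin.castAdd h i) * (EuclideanSpace.single j (1:ℝ)) (Fin.castAdd h i))
      = if (j:ℕ) < k then 2 * z j else 0 := by
  by_cases hj : (j:ℕ) < k
  · rw [if_pos hj]
    rw [Finset.sum_eq_single ⟨(j:ℕ), hj⟩]
    · have hje : Fin.castAdd h ⟨(j:ℕ), hj⟩ = j := by ext; simp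
      rw [hje]
      simp [EuclideanSpace.single_apply]
    · intro i _ hne
      have : Fin.castAdd h i ≠ j := by
        intro e
        apply hne; ext
        have := congrArg Fin.val e; simpa using this
      simp [EuclideanSpace.single_apply, this]
    · intro habs; exact absurd (Finset.mem_univ _) habs
  · rw [if_neg hj]
    apply Finset.sum_eq_zero; intro i _
    have : Fin.castAdd h i ≠ j := by
      intro e; apply hj; rw [← e]; simpa using i.2
    simp [EuclideanSpace.single_apply, this]

lemma sum_single_y {k h : ℕ} (z : E (k+h)) (j : Fin (k+h)) :
    (∑ i : Fin h, 2 * z (Fin.natAdd k i) * (EuclideanSpace.single j (1:ℝ)) (Fin.natAdd k i))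
      = if (j:ℕ) < k then 0 else 2 * z j := by
  by_cases hj : (j:ℕ) < k
  · rw [if_pos hj]
    apply Finset.sum_eq_zero; intro i _
    have : Fin.natAdd k i ≠ j := by
      intro e; rw [← e] at hj; simp [Fin.natAdd] at hj
    simp [EuclideanSpace.single_apply, this]
  · rw [if_neg hj]
    have hj' : (j:ℕ) - k < h := by have := j.2; omega
    rw [Finset.sum_eq_single ⟨(j:ℕ) - k, hj'⟩]
    · have hje : Fin.natAdd k ⟨(j:ℕ) - k, hj'⟩ = j := by ext; simp; omega
      rw [hje]
      simp [EuclideanSpace.single_apply]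
    · intro i _ hne
      have : Fin.natAdd k i ≠ j := by
        intro e
        apply hne; ext
        have := congrArg Fin.val e
        simp only [Fin.coe_natAdd] at this
        simp; omega
      simp [EuclideanSpace.single_apply, this]
    · intro habs; exact absurd (Finset.mem_univ _) habs

-- scalar building blocks
def pR (h : ℕ) : ℝ := (h:ℝ) - 1
def qR (k : ℕ) : ℝ := (k:ℝ) - 1
def uF (k h : ℕ) (z : E (k+h)) : ℝ := pR h * sS k h z
def vF (k h : ℕ) (z : E (k+h)) : ℝ := qR k * sT k h z
def wF (k h : ℕ) (d : ℝ) (z : E (k+h)) : ℝ := (uF k h z) ^ (d-1 : ℝ)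
def aF (k h : ℕ) (d : ℝ) (z : E (k+h)) : ℝ :=
  pR h / 2 * ((1+d) * uF k h z - d * vF k h z) * wF k h d z
def bF (k h : ℕ) (d : ℝ) (z : E (k+h)) : ℝ := -(qR k / 2) * uF k h z * wF k h d z
def NF (k h : ℕ) (d : ℝ) (z : E (k+h)) : ℝ :=
  aF k h d z * aF k h d z * sS k h z + bF k h d z * bF k h d z * sT k h z
def VF (k h : ℕ) (d : ℝ) (z : E (k+h)) : E (k+h) :=
  WithLp.toLp 2 (fun i : Fin (k+h) => (if (i:ℕ) < k then aF k h d z else bF k h d z) * z i)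
def sigF (k h : ℕ) (d : ℝ) (z : E (k+h)) : ℝ := Real.sqrt (NF k h d z)
def rhoF (k h : ℕ) (d : ℝ) (z : E (k+h)) : ℝ := (sigF k h d z)⁻¹
def cF (k h : ℕ) (d : ℝ) (z : E (k+h)) : ℝ := aF k h d z * rhoF k h d z
def eF (k h : ℕ) (d : ℝ) (z : E (k+h)) : ℝ := bF k h d z * rhoF k h d z
def GF (k h : ℕ) (d : ℝ) (z : E (k+h)) : E (k+h) :=
  WithLp.toLp 2 (fun i : Fin (k+h) => (if (i:ℕ) < k then cF k h d z else eF k h d z) * z i)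

-- partial derivative formulas
def dwS (k h : ℕ) (d : ℝ) (z : E (k+h)) : ℝ := (d-1) * (uF k h z)^(d-1-1:ℝ) * pR h
def AsF (k h : ℕ) (d : ℝ) (z : E (k+h)) : ℝ :=
  (pR h/2 * ((1+d)*uF k h z - d*vF k h z)) * dwS k h d z
    + wF k h d z * (pR h/2 * ((1+d)*pR h))
def AtF (k h : ℕ) (d : ℝ) (z : E (k+h)) : ℝ := wF k h d z * (pR h/2 * (-(d*qR k)))
def BsF (k h : ℕ) (d : ℝ) (z : E (k+h)) : ℝ :=
  (-(qR k/2) * uF k h z) * dwS k h d z + wF k h d z * (-(qR k/2) * pR h)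
def NsF (k h : ℕ) (d : ℝ) (z : E (k+h)) : ℝ :=
  2*aF k h d z*AsF k h d z*sS k h z + aF k h d z*aF k h d z
    + 2*bF k h d z*BsF k h d z*sT k h z
def NtF (k h : ℕ) (d : ℝ) (z : E (k+h)) : ℝ :=
  2*aF k h d z*AtF k h d z*sS k h z + bF k h d z*bF k h d z
def drF (k h : ℕ) (d : ℝ) (z : E (k+h)) : ℝ := -(1/(2*sigF k h d z))/(sigF k h d z^2)
def CSF (k h : ℕ) (d : ℝ) (z : E (k+h)) : ℝ :=
  AsF k h d z * rhoF k h d z + aF k h d z * (drF k h d z * NsF k h d z)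
def CTF (k h : ℕ) (d : ℝ) (z : E (k+h)) : ℝ :=
  AtF k h d z * rhoF k h d z + aF k h d z * (drF k h d z * NtF k h d z)
def ESF (k h : ℕ) (d : ℝ) (z : E (k+h)) : ℝ :=
  BsF k h d z * rhoF k h d z + bF k h d z * (drF k h d z * NsF k h d z)
def ETF (k h : ℕ) (d : ℝ) (z : E (k+h)) : ℝ :=
  bF k h d z * (drF k h d z * NtF k h d z)

lemma fU_eq (k h : ℕ) (d : ℝ) (z : E (k+h)) :
    fU k h d z = 1/4 * (uF k h z - vF k h z) * (uF k h z) ^ (d:ℝ) := by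
  unfold fU uG vG uF vF pR qR
  rw [nX_sq, nY_sq]

lemma hasGradient_fU (k h : ℕ) (d : ℝ) (z : E (k+h)) (hh : 2 ≤ h)
    (hs : 0 < sS k h z) : HasGradientAt (fU k h d) (VF k h d z) z := by
  obtain ⟨LS, hLS, hLSval⟩ := sS_hasFDerivAt k h z
  obtain ⟨LT, hLT, hLTval⟩ := sT_hasFDerivAt k h z
  have hp : (0:ℝ) < pR h := by
    unfold pR; have : (2:ℝ) ≤ (h:ℝ) := by exact_mod_cast hh
    linarith
  have hu : uF k h z ≠ 0 := by
    have : 0 < uF k h z := mul_pos hp hs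
    linarith
  have hU : HasFDerivAt (uF k h) (pR h • LS) z := hLS.const_mul (pR h)
  have hV : HasFDerivAt (vF k h) (qR k • LT) z := hLT.const_mul (qR k)
  have hA : HasFDerivAt (fun w => 1/4 * (uF k h w - vF k h w))
      ((1/4 : ℝ) • (pR h • LS - qR k • LT)) z := (hU.sub hV).const_mul (1/4)
  have hpow : HasFDerivAt (fun w => (uF k h w) ^ (d:ℝ))
      ((d * (uF k h z) ^ (d-1:ℝ)) • (pR h • LS)) z :=
    (Real.hasDerivAt_rpow_const (p := d) (Or.inl hu)).comp_hasFDerivAt z hU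
  have hF := hA.mul hpow
  have hfun : fU k h d = fun w => (1/4 * (uF k h w - vF k h w)) * (uF k h w) ^ (d:ℝ) := by
    funext w; rw [fU_eq]
  rw [HasGradientAt, HasGradientAtFilter, hfun]
  have hEq : InnerProductSpace.toDual ℝ (E (k+h)) (VF k h d z) =
      ((1/4 * (uF k h z - vF k h z)) • ((d * (uF k h z) ^ (d-1:ℝ)) • (pR h • LS)) +
        ((uF k h z) ^ (d:ℝ)) • ((1/4 : ℝ) • (pR h • LS - qR k • LT))) := by
    apply ContinuousLinearMap.ext; intro y
    have hls := hLSval y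
    have hlt := hLTval y
    simp only [InnerProductSpace.toDual_apply_apply, PiLp.inner_apply, RCLike.inner_apply,
      starRingEnd_apply, star_trivial, ContinuousLinearMap.add_apply,
      ContinuousLinearMap.smul_apply, ContinuousLinearMap.sub_apply, smul_eq_mul]
    rw [Fin.sum_univ_add]
    have e1 : ∀ i : Fin k, y (Fin.castAdd h i) * VF k h d z (Fin.castAdd h i) =
        aF k h d z * (z (Fin.castAdd h i) * y (Fin.castAdd h i)) := by
      intro i; unfold VF; simp only [PiLp.toLp_apply]; rw [if_pos]; · ring
      · simpa using i.isLt
    have e2 : ∀ j : Fin h, y (Fin.natAdd k j) * VF k h d z (Fin.natAdd k j) =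
        bF k h d z * (z (Fin.natAdd k j) * y (Fin.natAdd k j)) := by
      intro j; unfold VF; simp only [PiLp.toLp_apply]; rw [if_neg]; · ring
      · simp
    simp only [e1, e2]
    rw [← Finset.mul_sum, ← Finset.mul_sum]
    have hs1 : ∑ i : Fin k, z (Fin.castAdd h i) * y (Fin.castAdd h i) = LS y / 2 := by
      rw [hls, Finset.sum_div]
      apply Finset.sum_congr rfl; intros; ring
    have hs2 : ∑ j : Fin h, z (Fin.natAdd k j) * y (Fin.natAdd k j) = LT y / 2 := by
      rw [hlt, Finset.sum_div]
      apply Finset.sum_congr rfl; intros; ring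
    rw [hs1, hs2]
    unfold aF bF wF
    have hud : (uF k h z) ^ (d:ℝ) = (uF k h z) ^ (d-1:ℝ) * uF k h z := by
      rw [Real.rpow_sub_one hu]; field_simp
    rw [hud]
    ring
  rw [hEq]
  exact hF

lemma norm_VF (k h : ℕ) (d : ℝ) (z : E (k+h)) : ‖VF k h d z‖ = Real.sqrt (NF k h d z) := by
  rw [EuclideanSpace.norm_eq]
  congr 1
  rw [Fin.sum_univ_add]
  have e1 : ∀ i : Fin k, ‖VF k h d z (Fin.castAdd h i)‖^2 =
      aF k h d z * aF k h d z * (z (Fin.castAdd h i))^2 := by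
    intro i; unfold VF; rw [PiLp.toLp_apply, if_pos]
    · rw [Real.norm_eq_abs, sq_abs]; ring
    · simpa using i.isLt
  have e2 : ∀ j : Fin h, ‖VF k h d z (Fin.natAdd k j)‖^2 =
      bF k h d z * bF k h d z * (z (Fin.natAdd k j))^2 := by
    intro j; unfold VF; rw [PiLp.toLp_apply, if_neg]
    · rw [Real.norm_eq_abs, sq_abs]; ring
    · simp
  simp only [e1, e2]
  rw [← Finset.mul_sum, ← Finset.mul_sum]
  rfl

-- derivative of GF with trace value
set_option maxHeartbeats 2000000 in
lemma GF_fderiv (k h : ℕ) (d : ℝ) (z : E (k+h)) (hh : 2 ≤ h)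
    (hs : 0 < sS k h z) (hN : 0 < NF k h d z) :
    ∃ LG : E (k+h) →L[ℝ] E (k+h), HasFDerivAt (GF k h d) LG z ∧
      LinearMap.trace ℝ _ LG.toLinearMap =
        (k:ℝ) * cF k h d z + (h:ℝ) * eF k h d z
          + 2 * CSF k h d z * sS k h z + 2 * ETF k h d z * sT k h z := by
  obtain ⟨LS, hLS, hLSval⟩ := sS_hasFDerivAt k h z
  obtain ⟨LT, hLT, hLTval⟩ := sT_hasFDerivAt k h z
  have hp : (0:ℝ) < pR h := by
    unfold pR; have : (2:ℝ) ≤ (h:ℝ) := by exact_mod_cast hh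
    linarith
  have hu : uF k h z ≠ 0 := by
    have : 0 < uF k h z := mul_pos hp hs
    linarith
  have hσpos : 0 < sigF k h d z := Real.sqrt_pos.mpr hN
  have hσ : sigF k h d z ≠ 0 := ne_of_gt hσpos
  have hLSi : ∀ i : Fin (k+h), LS (EuclideanSpace.single i 1) =
      if (i:ℕ) < k then 2 * z i else 0 := by
    intro i; rw [hLSval]; exact sum_single_x z i
  have hLTi : ∀ i : Fin (k+h), LT (EuclideanSpace.single i 1) =
      if (i:ℕ) < k then 0 else 2 * z i := by
    intro i; rw [hLTval]; exact sum_single_y z i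
  -- build derivatives of the scalar fields, recording values
  have hU : HasFDerivAt (uF k h) (pR h • LS) z := hLS.const_mul (pR h)
  have hV : HasFDerivAt (vF k h) (qR k • LT) z := hLT.const_mul (qR k)
  have hW : HasFDerivAt (wF k h d)
      (((d-1) * (uF k h z) ^ (d-1-1:ℝ)) • (pR h • LS)) z :=
    (Real.hasDerivAt_rpow_const (p := d-1) (Or.inl hu)).comp_hasFDerivAt z hU
  have ha1 : HasFDerivAt (fun w => pR h/2 * ((1+d) * uF k h w - d * vF k h w))
      ((pR h/2) • (((1+d):ℝ) • (pR h • LS) - d • (qR k • LT))) z :=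
    (((hU.const_mul ((1+d):ℝ)).sub (hV.const_mul d)).const_mul (pR h/2))
  have haF : HasFDerivAt (aF k h d)
      ((pR h/2 * ((1+d) * uF k h z - d * vF k h z)) •
          (((d-1) * (uF k h z) ^ (d-1-1:ℝ)) • (pR h • LS)) +
        wF k h d z • ((pR h/2) • (((1+d):ℝ) • (pR h • LS) - d • (qR k • LT)))) z :=
    ha1.mul hW
  have hb1 : HasFDerivAt (fun w => -(qR k/2) * uF k h w) ((-(qR k/2)) • (pR h • LS)) z :=
    hU.const_mul (-(qR k/2))
  have hbF : HasFDerivAt (bF k h d)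
      ((-(qR k/2) * uF k h z) • (((d-1) * (uF k h z) ^ (d-1-1:ℝ)) • (pR h • LS)) +
        wF k h d z • ((-(qR k/2)) • (pR h • LS))) z := hb1.mul hW
  set La := (pR h/2 * ((1+d) * uF k h z - d * vF k h z)) •
          (((d-1) * (uF k h z) ^ (d-1-1:ℝ)) • (pR h • LS)) +
        wF k h d z • ((pR h/2) • (((1+d):ℝ) • (pR h • LS) - d • (qR k • LT))) with hLa
  set Lb := (-(qR k/2) * uF k h z) • (((d-1) * (uF k h z) ^ (d-1-1:ℝ)) • (pR h • LS)) +
        wF k h d z • ((-(qR k/2)) • (pR h • LS)) with hLb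
  have hNF : HasFDerivAt (NF k h d)
      ((aF k h d z * aF k h d z) • LS + sS k h z • (aF k h d z • La + aF k h d z • La) +
        ((bF k h d z * bF k h d z) • LT + sT k h z • (bF k h d z • Lb + bF k h d z • Lb))) z :=
    ((haF.mul haF).mul hLS).add ((hbF.mul hbF).mul hLT)
  set LN := (aF k h d z * aF k h d z) • LS + sS k h z • (aF k h d z • La + aF k h d z • La) +
        ((bF k h d z * bF k h d z) • LT + sT k h z • (bF k h d z • Lb + bF k h d z • Lb))
    with hLN
  have hrho : HasFDerivAt (rhoF k h d)
      ((-(1/(2*sigF k h d z))/(sigF k h d z^2)) • LN) z := by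
    have hsqrt : HasDerivAt Real.sqrt (1/(2*sigF k h d z)) (NF k h d z) :=
      Real.hasDerivAt_sqrt (ne_of_gt hN)
    have hinv : HasDerivAt (fun y => (Real.sqrt y)⁻¹)
        (-(1/(2*sigF k h d z))/(sigF k h d z^2)) (NF k h d z) := by
      have := hsqrt.fun_inv hσ
      simpa [sigF] using this
    exact hinv.comp_hasFDerivAt z hNF
  set Lr := (-(1/(2*sigF k h d z))/(sigF k h d z^2)) • LN with hLr
  have hcF : HasFDerivAt (cF k h d) (aF k h d z • Lr + rhoF k h d z • La) z := haF.mul hrho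
  have heF : HasFDerivAt (eF k h d) (bF k h d z • Lr + rhoF k h d z • Lb) z := hbF.mul hrho
  set Lc := aF k h d z • Lr + rhoF k h d z • La with hLc
  set Le := bF k h d z • Lr + rhoF k h d z • Lb with hLe
  -- the component derivative maps
  set A' := fun i : Fin (k+h) =>
    (if (i:ℕ) < k then
        ((cF k h d z) • (EuclideanSpace.proj i) + (z i) • Lc)
      else
        ((eF k h d z) • (EuclideanSpace.proj i) + (z i) • Le)).smulRight
      (EuclideanSpace.single i (1:ℝ)) with hA'
  have hGF : HasFDerivAt (GF k h d) (∑ i, A' i) z := by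
    have hsum : HasFDerivAt
        (fun w => ∑ i : Fin (k+h),
          ((if (i:ℕ) < k then cF k h d w else eF k h d w) * w i) •
            EuclideanSpace.single i (1:ℝ)) (∑ i, A' i) z := by
      apply HasFDerivAt.fun_sum
      intro i _
      rw [hA']
      by_cases hi : (i:ℕ) < k
      · simp only [if_pos hi]
        have hcomp : HasFDerivAt (fun w => cF k h d w * w i)
            (cF k h d z • (EuclideanSpace.proj i) + z i • Lc) z :=
          hcF.mul ((EuclideanSpace.proj (𝕜 := ℝ) i).hasFDerivAt)
        exact hcomp.smul_const (EuclideanSpace.single i (1:ℝ))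
      · simp only [if_neg hi]
        have hcomp : HasFDerivAt (fun w => eF k h d w * w i)
            (eF k h d z • (EuclideanSpace.proj i) + z i • Le) z :=
          heF.mul ((EuclideanSpace.proj (𝕜 := ℝ) i).hasFDerivAt)
        exact hcomp.smul_const (EuclideanSpace.single i (1:ℝ))
    have hfun : GF k h d = fun w => ∑ i : Fin (k+h),
        ((if (i:ℕ) < k then cF k h d w else eF k h d w) * w i) •
          EuclideanSpace.single i (1:ℝ) := by
      funext w; ext j
      rw [WithLp.ofLp_sum, Finset.sum_apply]
      rw [Finset.sum_eq_single j]
      · simp [GF, EuclideanSpace.single_apply, -ite_smul]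
      · intro i _ hne
        have : j ≠ i := fun e => hne e.symm
        simp [EuclideanSpace.single_apply, this, -ite_smul]
      · intro habs; exact absurd (Finset.mem_univ _) habs
    rw [hfun]
    exact hsum
  refine ⟨∑ i, A' i, hGF, ?_⟩
  rw [trace_clm]
  have hdiag : ∀ i : Fin (k+h), (∑ j, A' j) (EuclideanSpace.single i 1) i =
      (if (i:ℕ) < k then cF k h d z + 2 * CSF k h d z * (z i)^2
        else eF k h d z + 2 * ETF k h d z * (z i)^2) := by
    intro i
    rw [ContinuousLinearMap.sum_apply]
    rw [WithLp.ofLp_sum, Finset.sum_apply]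
    rw [Finset.sum_eq_single i]
    · rw [hA']
      have hproj : (EuclideanSpace.proj i) (EuclideanSpace.single i (1:ℝ)) = 1 := by
        simp [EuclideanSpace.single_apply]
      have hLcval : Lc (EuclideanSpace.single i 1) =
          CSF k h d z * (if (i:ℕ) < k then 2 * z i else 0)
            + CTF k h d z * (if (i:ℕ) < k then 0 else 2 * z i) := by
        rw [hLc, hLr, hLN, hLa, hLb]
        simp only [ContinuousLinearMap.add_apply, ContinuousLinearMap.smul_apply,
          ContinuousLinearMap.sub_apply, smul_eq_mul, hLSi i, hLTi i]
        simp only [CSF, CTF, NsF, NtF, AsF, AtF, BsF, drF, rhoF, dwS, wF]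
        have hw2 : uF k h z ^ (d-1-1:ℝ) = uF k h z ^ (d-1:ℝ) / uF k h z :=
          Real.rpow_sub_one hu (d-1)
        rw [hw2]
        by_cases hi : (i:ℕ) < k <;>
          simp only [if_pos, if_neg, hi, if_true, if_false] <;>
          field_simp <;> ring
      have hLeval : Le (EuclideanSpace.single i 1) =
          ESF k h d z * (if (i:ℕ) < k then 2 * z i else 0)
            + ETF k h d z * (if (i:ℕ) < k then 0 else 2 * z i) := by
        rw [hLe, hLr, hLN, hLa, hLb]
        simp only [ContinuousLinearMap.add_apply, ContinuousLinearMap.smul_apply,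
          ContinuousLinearMap.sub_apply, smul_eq_mul, hLSi i, hLTi i]
        simp only [ESF, ETF, NsF, NtF, AsF, AtF, BsF, drF, rhoF, dwS, wF]
        have hw2 : uF k h z ^ (d-1-1:ℝ) = uF k h z ^ (d-1:ℝ) / uF k h z :=
          Real.rpow_sub_one hu (d-1)
        rw [hw2]
        by_cases hi : (i:ℕ) < k <;>
          simp only [if_pos, if_neg, hi, if_true, if_false] <;>
          field_simp <;> ring
      by_cases hi : (i:ℕ) < k
      · simp only [if_pos hi, ContinuousLinearMap.smulRight_apply,
          ContinuousLinearMap.add_apply, ContinuousLinearMap.smul_apply, smul_eq_mul,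
          PiLp.smul_apply, hproj, hLcval]
        simp [EuclideanSpace.single_apply, hi]
        ring
      · simp only [if_neg hi, ContinuousLinearMap.smulRight_apply,
          ContinuousLinearMap.add_apply, ContinuousLinearMap.smul_apply, smul_eq_mul,
          PiLp.smul_apply, hproj, hLeval]
        simp [EuclideanSpace.single_apply, hi]
        ring
    · intro j _ hne
      rw [hA']
      have : i ≠ j := fun e => hne e.symm
      simp [EuclideanSpace.single_apply, this]
    · intro habs; exact absurd (Finset.mem_univ _) habs
  simp only [hdiag]
  rw [Fin.sum_univ_add]
  have e1 : ∀ i : Fin k, (if ((Fin.castAdd h i : Fin (k+h)):ℕ) < k then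
      cF k h d z + 2 * CSF k h d z * (z (Fin.castAdd h i))^2
      else eF k h d z + 2 * ETF k h d z * (z (Fin.castAdd h i))^2) =
      cF k h d z + 2 * CSF k h d z * (z (Fin.castAdd h i))^2 := by
    intro i; rw [if_pos]; simpa using i.isLt
  have e2 : ∀ j : Fin h, (if ((Fin.natAdd k j : Fin (k+h)):ℕ) < k then
      cF k h d z + 2 * CSF k h d z * (z (Fin.natAdd k j))^2
      else eF k h d z + 2 * ETF k h d z * (z (Fin.natAdd k j))^2) =
      eF k h d z + 2 * ETF k h d z * (z (Fin.natAdd k j))^2 := by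
    intro j; rw [if_neg]; simp
  simp only [e1, e2]
  rw [Finset.sum_add_distrib, Finset.sum_add_distrib, Finset.sum_const, Finset.sum_const]
  rw [← Finset.mul_sum, ← Finset.mul_sum]
  simp only [Finset.card_univ, Fintype.card_fin, nsmul_eq_mul]
  have : (∑ i : Fin k, (z (Fin.castAdd h i))^2) = sS k h z := rfl
  rw [this]
  have : (∑ j : Fin h, (z (Fin.natAdd k j))^2) = sT k h z := rfl
  rw [this]
  ring



lemma NF_contAt (k h : ℕ) (d : ℝ) (z : E (k+h)) (hh : 2 ≤ h) (hs : 0 < sS k h z) :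
    ContinuousAt (NF k h d) z := by
  obtain ⟨LS, hLS, _⟩ := sS_hasFDerivAt k h z
  obtain ⟨LT, hLT, _⟩ := sT_hasFDerivAt k h z
  have hp : (0:ℝ) < pR h := by
    unfold pR; have : (2:ℝ) ≤ (h:ℝ) := by exact_mod_cast hh
    linarith
  have hu : uF k h z ≠ 0 := ne_of_gt (mul_pos hp hs)
  have hcS : ContinuousAt (sS k h) z := hLS.differentiableAt.continuousAt
  have hcT : ContinuousAt (sT k h) z := hLT.differentiableAt.continuousAt
  have hcU : ContinuousAt (uF k h) z := (continuousAt_const.mul hcS)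
  have hcV : ContinuousAt (vF k h) z := (continuousAt_const.mul hcT)
  have hcW : ContinuousAt (wF k h d) z :=
    (Real.continuousAt_rpow_const _ _ (Or.inl hu)).comp hcU
  have hcA : ContinuousAt (aF k h d) z :=
    ((continuousAt_const.mul ((continuousAt_const.mul hcU).sub
      (continuousAt_const.mul hcV)))).mul hcW
  have hcB : ContinuousAt (bF k h d) z := (continuousAt_const.mul hcU).mul hcW
  exact ((hcA.mul hcA).mul hcS).add ((hcB.mul hcB).mul hcT)

lemma NF_nonneg (k h : ℕ) (d : ℝ) (z : E (k+h)) : 0 ≤ NF k h d z := by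
  unfold NF
  have h1 := mul_nonneg (mul_self_nonneg (aF k h d z)) (sS_nonneg k h z)
  have h2 := mul_nonneg (mul_self_nonneg (bF k h d z)) (sT_nonneg k h z)
  linarith

end LawsonAux

open LawsonAux in
/-- The formula for `|∇f|^3 · div(∇f/|∇f|)` when `f = (1/4)(u-v)u^d` (Section 3.1 of
the paper). -/
theorem stmt4 (k h : ℕ) (hk : 2 ≤ k) (hh : 2 ≤ h) (d : ℝ) (hd : 0 < d)
    (z : EuclideanSpace ℝ (Fin (k + h))) (hx : nX k h z ≠ 0)
    (hgrad : gradient (fU k h d) z ≠ 0) :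
    ‖gradient (fU k h d) z‖ ^ 3 *
        divg (fun w => ‖gradient (fU k h d) w‖⁻¹ • gradient (fU k h d) w) z =
      ((h : ℝ) - 1) * ((k : ℝ) - 1) / 8 * uG k h z ^ (3 * d - 2) *
        (uG k h z - vG k h z) *
        ((1 + d) ^ 2 * (d * ((h : ℝ) - 1) - 1) * uG k h z ^ 2
          + d * ((k : ℝ) - 2 + d * (1 + 2 * d - 2 * (1 + d) * (h : ℝ)))
              * uG k h z * vG k h z
          + d ^ 3 * ((h : ℝ) - 1) * vG k h z ^ 2) := by
  have hp : (0:ℝ) < pR h := by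
    unfold pR; have : (2:ℝ) ≤ (h:ℝ) := by exact_mod_cast hh
    linarith
  have hs : 0 < sS k h z := by
    have h2 : 0 < nX k h z ^ 2 := by positivity
    rwa [nX_sq] at h2
  have hupos : 0 < uF k h z := mul_pos hp hs
  have hu : uF k h z ≠ 0 := ne_of_gt hupos
  have hgradz : gradient (fU k h d) z = VF k h d z :=
    (hasGradient_fU k h d z hh hs).gradient
  have hN : 0 < NF k h d z := by
    rcases lt_or_eq_of_le (NF_nonneg k h d z) with h' | h'
    · exact h'
    · exfalso; apply hgrad
      rw [hgradz]
      have : ‖VF k h d z‖ = 0 := by rw [norm_VF, ← h', Real.sqrt_zero]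
      exact norm_eq_zero.mp this
  have hσpos : 0 < sigF k h d z := Real.sqrt_pos.mpr hN
  have hσ : sigF k h d z ≠ 0 := ne_of_gt hσpos
  have hσ2 : sigF k h d z ^ 2 = NF k h d z := Real.sq_sqrt (NF_nonneg k h d z)
  have hnormz : ‖gradient (fU k h d) z‖ = sigF k h d z := by
    rw [hgradz, norm_VF]; rfl
  -- eventual equality with GF
  have hcontS : ContinuousAt (sS k h) z := by
    obtain ⟨LS, hLS, _⟩ := sS_hasFDerivAt k h z
    exact hLS.differentiableAt.continuousAt
  have hcontN : ContinuousAt (NF k h d) z := NF_contAt k h d z hh hs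
  have hev : (fun w => ‖gradient (fU k h d) w‖⁻¹ • gradient (fU k h d) w)
      =ᶠ[nhds z] GF k h d := by
    have h1 : ∀ᶠ w in nhds z, 0 < sS k h w := hcontS.eventually (eventually_gt_nhds hs)
    have h2 : ∀ᶠ w in nhds z, 0 < NF k h d w := hcontN.eventually (eventually_gt_nhds hN)
    filter_upwards [h1, h2] with w hw1 hw2
    have hgw : gradient (fU k h d) w = VF k h d w :=
      (hasGradient_fU k h d w hh hw1).gradient
    rw [hgw, norm_VF]
    ext i
    show (Real.sqrt (NF k h d w))⁻¹ * VF k h d w i = GF k h d w i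
    unfold VF GF cF eF rhoF sigF
    by_cases hi : (i:ℕ) < k <;> simp only [PiLp.toLp_apply, if_pos, if_neg, hi, if_true, if_false] <;> ring
  obtain ⟨LG, hLG, htr⟩ := GF_fderiv k h d z hh hs hN
  have hdiv : divg (fun w => ‖gradient (fU k h d) w‖⁻¹ • gradient (fU k h d) w) z =
      (k:ℝ) * cF k h d z + (h:ℝ) * eF k h d z
        + 2 * CSF k h d z * sS k h z + 2 * ETF k h d z * sT k h z := by
    unfold divg
    rw [hev.fderiv_eq, hLG.fderiv, htr]
  rw [hdiv, hnormz]
  -- rewrite uG, vG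
  have huG : uG k h z = uF k h z := by unfold uG uF pR; rw [nX_sq]
  have hvG : vG k h z = vF k h z := by unfold vG vF qR; rw [nY_sq]
  rw [huG, hvG]
  -- step 1: eliminate sigma
  have e1 : sigF k h d z ^ 3 * ((k:ℝ) * cF k h d z + (h:ℝ) * eF k h d z
        + 2 * CSF k h d z * sS k h z + 2 * ETF k h d z * sT k h z)
      = NF k h d z * ((k:ℝ) * aF k h d z + (h:ℝ) * bF k h d z + 2 * AsF k h d z * sS k h z)
        - sS k h z * aF k h d z * NsF k h d z - sT k h z * bF k h d z * NtF k h d z := by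
    simp only [cF, eF, CSF, ETF, rhoF, drF]
    rw [← hσ2]
    field_simp
    ring
  rw [e1]
  -- step 2: pure algebra
  have hw2 : uF k h z ^ (d-1-1:ℝ) = uF k h z ^ (d-1:ℝ) / uF k h z :=
    Real.rpow_sub_one hu (d-1)
  have h3d : uF k h z ^ (3*d-2:ℝ) = (uF k h z ^ (d-1:ℝ))^(3:ℕ) * uF k h z := by
    rw [show (3*d-2:ℝ) = (d-1)*3 + 1 by ring, Real.rpow_add hupos, Real.rpow_one,
      Real.rpow_mul hupos.le, ← Real.rpow_natCast (uF k h z ^ (d-1:ℝ)) 3]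
    norm_num
  rw [h3d]
  simp only [NF, NsF, NtF, AsF, AtF, BsF, aF, bF, dwS, wF]
  rw [hw2]
  have hqpos : (0:ℝ) < qR k := by
    unfold qR; have : (2:ℝ) ≤ (k:ℝ) := by exact_mod_cast hk
    linarith
  have hkr : (k:ℝ) = qR k + 1 := by unfold qR; ring
  have hhr : (h:ℝ) = pR h + 1 := by unfold pR; ring
  rw [hkr, hhr]
  unfold uF vF
  field_simp
  ring
end
end

section
/- Let k, h ≥ 2 be integers and let M_{kh} = {(x',y') ∈ ℝ^k × ℝ^h : |x'|/√(k−1) = |y'|/√(h−1)}. Then for every z = (x,y) ∈ ℝ^k × ℝ^h, the Euclidean distance from z to M_{kh} equals |√(h−1)·|x| − √(k−1)·|y|| / √(h+k−2); equivalently, writing u = (h−1)|x|^2, v = (k−1)|y|^2, dist(z, M_{kh}) = |√u − √v|/√(h+k−2). -/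
open MeasureTheory
open scoped RealInnerProductSpace ENNReal

noncomputable section

/-- first-block projection -/
def projX (k h : ℕ) (z : EuclideanSpace ℝ (Fin (k + h))) : EuclideanSpace ℝ (Fin k) :=
  WithLp.toLp 2 (fun i => z (Fin.castAdd h i))

def projY (k h : ℕ) (z : EuclideanSpace ℝ (Fin (k + h))) : EuclideanSpace ℝ (Fin h) :=
  WithLp.toLp 2 (fun j => z (Fin.natAdd k j))

lemma nX_eq (k h : ℕ) (z : EuclideanSpace ℝ (Fin (k + h))) : nX k h z = ‖projX k h z‖ := by
  rw [EuclideanSpace.norm_eq, nX]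
  congr 1
  refine Finset.sum_congr rfl fun i _ => ?_
  rw [Real.norm_eq_abs, sq_abs]; rfl

lemma nY_eq (k h : ℕ) (z : EuclideanSpace ℝ (Fin (k + h))) : nY k h z = ‖projY k h z‖ := by
  rw [EuclideanSpace.norm_eq, nY]
  congr 1
  refine Finset.sum_congr rfl fun i _ => ?_
  rw [Real.norm_eq_abs, sq_abs]; rfl

lemma norm_sq_split (k h : ℕ) (z : EuclideanSpace ℝ (Fin (k + h))) :
    ‖z‖ ^ 2 = ‖projX k h z‖ ^ 2 + ‖projY k h z‖ ^ 2 := by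
  rw [EuclideanSpace.norm_eq, EuclideanSpace.norm_eq, EuclideanSpace.norm_eq,
    Real.sq_sqrt (by positivity), Real.sq_sqrt (by positivity), Real.sq_sqrt (by positivity)]
  rw [Fin.sum_univ_add (f := fun i => ‖z i‖ ^ 2)]
  rfl

lemma aux_cs (c d u v : ℝ) :
    |d * u - c * v| ≤ Real.sqrt (c ^ 2 + d ^ 2) * Real.sqrt (u ^ 2 + v ^ 2) := by
  rw [← Real.sqrt_mul_self (abs_nonneg (d * u - c * v)), ← Real.sqrt_mul (by positivity)]
  apply Real.sqrt_le_sqrt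
  rw [abs_mul_abs_self]
  nlinarith [sq_nonneg (c * u + d * v)]

lemma zero_mem_Mset (k h : ℕ) : (0 : EuclideanSpace ℝ (Fin (k + h))) ∈ Mset k h := by
  have hx : nX k h 0 = 0 := by
    rw [nX_eq]
    have : projX k h (0 : EuclideanSpace ℝ (Fin (k + h))) = 0 := by ext i; simp [projX]
    rw [this, norm_zero]
  have hy : nY k h 0 = 0 := by
    rw [nY_eq]
    have : projY k h (0 : EuclideanSpace ℝ (Fin (k + h))) = 0 := by ext i; simp [projY]
    rw [this, norm_zero]
  simp [Mset, hx, hy]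

lemma plane_calc (c d N a b : ℝ) (hN : 0 < N) (hN2 : N ^ 2 = c ^ 2 + d ^ 2) :
    (a - c * ((c * a + d * b) / N ^ 2)) ^ 2 + (b - d * ((c * a + d * b) / N ^ 2)) ^ 2
      = ((d * a - c * b) / N) ^ 2 := by
  have hN' : N ≠ 0 := hN.ne'
  have ht : ((c * a + d * b) / N ^ 2) * N ^ 2 = c * a + d * b := div_mul_cancel₀ _ (by positivity)
  rw [div_pow, eq_div_iff (by positivity)]
  linear_combination (a ^ 2 + b ^ 2 - ((c * a + d * b) / N ^ 2) ^ 2 * N ^ 2) * hN2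
    + (((c * a + d * b) / N ^ 2) * N ^ 2 - (c * a + d * b)) * ht


set_option maxHeartbeats 1000000

/-- The Euclidean distance from `z = (x,y)` to the Lawson cone `M_{kh}` equals
`|√(h-1)|x| - √(k-1)|y||/√(h+k-2)`. -/
theorem stmt7 (k h : ℕ) (hk : 2 ≤ k) (hh : 2 ≤ h)
    (z : EuclideanSpace ℝ (Fin (k + h))) :
    Metric.infDist z (Mset k h) =
      |Real.sqrt ((h : ℝ) - 1) * nX k h z - Real.sqrt ((k : ℝ) - 1) * nY k h z|
        / Real.sqrt ((h : ℝ) + k - 2) := by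
  have hk1 : (1 : ℝ) ≤ (k : ℝ) := by exact_mod_cast hk.trans' (by norm_num)
  have hh1 : (1 : ℝ) ≤ (h : ℝ) := by exact_mod_cast hh.trans' (by norm_num)
  set c := Real.sqrt ((k : ℝ) - 1) with hc_def
  set d := Real.sqrt ((h : ℝ) - 1) with hd_def
  set N := Real.sqrt ((h : ℝ) + (k : ℝ) - 2) with hN_def
  have hk2 : (2 : ℝ) ≤ (k : ℝ) := by exact_mod_cast hk
  have hh2 : (2 : ℝ) ≤ (h : ℝ) := by exact_mod_cast hh
  have hc : 0 < c := Real.sqrt_pos.2 (by linarith)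
  have hd : 0 < d := Real.sqrt_pos.2 (by linarith)
  have hN : 0 < N := Real.sqrt_pos.2 (by linarith)
  have hc2 : c ^ 2 = (k : ℝ) - 1 := Real.sq_sqrt (by linarith)
  have hd2 : d ^ 2 = (h : ℝ) - 1 := Real.sq_sqrt (by linarith)
  have hN2 : N ^ 2 = c ^ 2 + d ^ 2 := by
    rw [hc2, hd2, hN_def, Real.sq_sqrt (by linarith)]; ring
  set a := nX k h z with ha_def
  set b := nY k h z with hb_def
  have ha0 : 0 ≤ a := Real.sqrt_nonneg _
  have hb0 : 0 ≤ b := Real.sqrt_nonneg _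
  clear_value c d N a b
  -- key distance bound for any point of the cone
  have key : ∀ w ∈ Mset k h, |d * a - c * b| / N ≤ dist z w := by
    intro w hw
    have hw' : d * nX k h w = c * nY k h w := by
      have h' := hw
      simp only [Mset, Set.mem_setOf_eq, ← hc_def, ← hd_def] at h'
      rw [div_eq_div_iff hc.ne' hd.ne'] at h'
      linarith
    have ha'0 : 0 ≤ nX k h w := Real.sqrt_nonneg _
    set a' := nX k h w with ha'_def
    set b' := nY k h w with hb'_def
    have h1 : |d * a - c * b| = |d * (a - a') - c * (b - b')| := by
      rw [show d * (a - a') - c * (b - b') = d * a - c * b - (d * a' - c * b') by ring,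
        hw']
      ring_nf
    have h2 : |d * (a - a') - c * (b - b')| ≤
        N * Real.sqrt ((a - a') ^ 2 + (b - b') ^ 2) := by
      rw [hN_def, show (h : ℝ) + (k : ℝ) - 2 = c ^ 2 + d ^ 2 by rw [hc2, hd2]; ring]
      exact aux_cs c d _ _
    have h3 : Real.sqrt ((a - a') ^ 2 + (b - b') ^ 2) ≤ dist z w := by
      rw [dist_eq_norm]
      rw [show ‖z - w‖ = Real.sqrt (‖z - w‖ ^ 2) from (Real.sqrt_sq (norm_nonneg _)).symm]
      apply Real.sqrt_le_sqrt
      rw [norm_sq_split]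
      have hxa : |a - a'| ≤ ‖projX k h (z - w)‖ := by
        have : projX k h (z - w) = projX k h z - projX k h w := by ext i; simp [projX]
        rw [this, ha_def, ha'_def, nX_eq, nX_eq]
        exact abs_norm_sub_norm_le _ _
      have hyb : |b - b'| ≤ ‖projY k h (z - w)‖ := by
        have : projY k h (z - w) = projY k h z - projY k h w := by ext i; simp [projY]
        rw [this, hb_def, hb'_def, nY_eq, nY_eq]
        exact abs_norm_sub_norm_le _ _
      have := sq_le_sq' (neg_abs_le _) (le_abs_self (a - a'))
      nlinarith [abs_nonneg (a - a'), abs_nonneg (b - b'), norm_nonneg (projX k h (z - w)),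
        norm_nonneg (projY k h (z - w)), sq_abs (a - a'), sq_abs (b - b'),
        mul_self_le_mul_self (abs_nonneg (a-a')) hxa, mul_self_le_mul_self (abs_nonneg (b-b')) hyb]
    rw [div_le_iff₀ hN]
    calc |d * a - c * b| = |d * (a - a') - c * (b - b')| := h1
      _ ≤ N * Real.sqrt ((a - a') ^ 2 + (b - b') ^ 2) := h2
      _ ≤ N * dist z w := by
          exact mul_le_mul_of_nonneg_left h3 hN.le
      _ = dist z w * N := by ring
  -- nonemptiness of the cone
  have h0 := zero_mem_Mset k h
  -- construction of the closest point
  set e := (d * a - c * b) / N with he_def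
  have heN : e * N = d * a - c * b := by
    rw [he_def, div_mul_cancel₀ _ hN.ne']
  set t := (c * a + d * b) / N ^ 2 with ht_def
  have ht0 : 0 ≤ t := by positivity
  set r := c * t with hr_def
  set s := d * t with hs_def
  have hr0 : 0 ≤ r := by positivity
  have hs0 : 0 ≤ s := by positivity
  have har : a - r = d * e / N := by
    rw [hr_def, ht_def, he_def]
    field_simp
    linear_combination a * hN2
  have hbs : b - s = -(c * e / N) := by
    rw [hs_def, ht_def, he_def]
    field_simp
    linear_combination b * hN2
  obtain ⟨ex, hex, hxe⟩ : ∃ ex : EuclideanSpace ℝ (Fin k), ‖ex‖ = 1 ∧ projX k h z = a • ex := by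
    by_cases ha : a = 0
    · refine ⟨EuclideanSpace.single (⟨0, by omega⟩ : Fin k) (1 : ℝ), by
        rw [EuclideanSpace.norm_single]; norm_num, ?_⟩
      have : ‖projX k h z‖ = 0 := by rw [← nX_eq, ← ha_def, ha]
      rw [ha, zero_smul, norm_eq_zero.mp this]
    · refine ⟨a⁻¹ • projX k h z, ?_, ?_⟩
      · rw [norm_smul, ← nX_eq, ← ha_def, Real.norm_eq_abs, abs_inv,
          abs_of_nonneg ha0, inv_mul_cancel₀ ha]
      · rw [smul_smul, mul_inv_cancel₀ ha, one_smul]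
  obtain ⟨ey, hey, hye⟩ : ∃ ey : EuclideanSpace ℝ (Fin h), ‖ey‖ = 1 ∧ projY k h z = b • ey := by
    by_cases hb : b = 0
    · refine ⟨EuclideanSpace.single (⟨0, by omega⟩ : Fin h) (1 : ℝ), by
        rw [EuclideanSpace.norm_single]; norm_num, ?_⟩
      have : ‖projY k h z‖ = 0 := by rw [← nY_eq, ← hb_def, hb]
      rw [hb, zero_smul, norm_eq_zero.mp this]
    · refine ⟨b⁻¹ • projY k h z, ?_, ?_⟩
      · rw [norm_smul, ← nY_eq, ← hb_def, Real.norm_eq_abs, abs_inv,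
          abs_of_nonneg hb0, inv_mul_cancel₀ hb]
      · rw [smul_smul, mul_inv_cancel₀ hb, one_smul]
  obtain ⟨w, hw_def⟩ : ∃ w : EuclideanSpace ℝ (Fin (k + h)),
      w = WithLp.toLp 2 (fun i => (Fin.addCases (fun i => r * ex i) (fun j => s * ey j) i : ℝ)) := ⟨_, rfl⟩
  have hwx : projX k h w = r • ex := by
    ext i
    simp [projX, hw_def]
  have hwy : projY k h w = s • ey := by
    ext j
    simp [projY, hw_def]
  have hwnx : nX k h w = r := by
    rw [nX_eq, hwx, norm_smul, hex, Real.norm_eq_abs, abs_of_nonneg hr0, mul_one]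
  have hwny : nY k h w = s := by
    rw [nY_eq, hwy, norm_smul, hey, Real.norm_eq_abs, abs_of_nonneg hs0, mul_one]
  have hwM : w ∈ Mset k h := by
    simp only [Mset, Set.mem_setOf_eq, ← hc_def, ← hd_def, hwnx, hwny, hr_def, hs_def]
    rw [mul_div_cancel_left₀ _ hc.ne', mul_div_cancel_left₀ _ hd.ne']
  have hdist : dist z w = |d * a - c * b| / N := by
    rw [dist_eq_norm,
      show ‖z - w‖ = Real.sqrt (‖z - w‖ ^ 2) from (Real.sqrt_sq (norm_nonneg _)).symm,
      norm_sq_split]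
    have hx' : projX k h (z - w) = (a - r) • ex := by
      have : projX k h (z - w) = projX k h z - projX k h w := by ext i; simp [projX]
      rw [this, hxe, hwx, ← sub_smul]
    have hy' : projY k h (z - w) = (b - s) • ey := by
      have : projY k h (z - w) = projY k h z - projY k h w := by ext i; simp [projY]
      rw [this, hye, hwy, ← sub_smul]
    rw [hx', hy', norm_smul, norm_smul, hex, hey, mul_one, mul_one,
      Real.norm_eq_abs, Real.norm_eq_abs, sq_abs, sq_abs, har, hbs]
    rw [show (d * e / N) ^ 2 + (-(c * e / N)) ^ 2 = e ^ 2 * ((c ^ 2 + d ^ 2) / N ^ 2) by ring,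
      ← hN2, div_self (by positivity), mul_one, Real.sqrt_sq_eq_abs, he_def, abs_div,
      abs_of_nonneg hN.le]
  refine le_antisymm ?_ ?_
  · calc Metric.infDist z (Mset k h) ≤ dist z w := Metric.infDist_le_dist_of_mem hwM
      _ = |d * a - c * b| / N := hdist
  · by_contra hlt
    push_neg at hlt
    obtain ⟨w', hw'M, hw'lt⟩ := (Metric.infDist_lt_iff ⟨0, h0⟩).1 hlt
    exact absurd (key w' hw'M) (not_le.2 hw'lt)
end
end

section
/- Let k, h ≥ 2 be integers, m = k + h, and let R > 0, ε > 0. For z = (x,y) ∈ ℝ^k × ℝ^h let p(z) = | |x|/√(k−1) − |y|/√(h−1) |, and let H_R = B_R^k × B_R^h. Then λ^m({z ∈ H_R : p(z) < ε}) ≤ 2^k ω_k ω_h (k−1)^{k/2} (h−1)^{h/2} · ε · ( ε^{m−1} + h R^{m−1} / ( (h−1)^{(m−1)/2} (m−1) ) ), where λ^m is the m-dimensional Lebesgue measure and ω_j denotes the Lebesgue measure of the unit ball in ℝ^j. -/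
open MeasureTheory
open scoped RealInnerProductSpace ENNReal

noncomputable section

/-- `ω_j`, the Lebesgue volume of the unit ball in `ℝ^j`. -/
def uball (j : ℕ) : ℝ := (volume (Metric.ball (0 : EuclideanSpace ℝ (Fin j)) 1)).toReal

/-- `p(z) = ||x|/√(k-1) - |y|/√(h-1)|`. -/
def pfun (k h : ℕ) (z : EuclideanSpace ℝ (Fin (k + h))) : ℝ :=
  |nX k h z / Real.sqrt ((k : ℝ) - 1) - nY k h z / Real.sqrt ((h : ℝ) - 1)|

/-! ### Auxiliary material for the proof of `stmt12` -/

/-- Joining a pair into Euclidean space of the sum dimension. -/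
def joinFn (k h : ℕ) (p : EuclideanSpace ℝ (Fin k) × EuclideanSpace ℝ (Fin h)) :
    EuclideanSpace ℝ (Fin (k + h)) :=
  WithLp.toLp 2 fun i => Fin.addCases (motive := fun _ => ℝ) (fun i => p.1 i) (fun j => p.2 j) i

theorem joinFn_mp (k h : ℕ) :
    MeasurePreserving (joinFn k h) (volume.prod volume) volume := by
  have e1 := (EuclideanSpace.volume_preserving_symm_measurableEquiv_toLp (Fin k)).prod
    (EuclideanSpace.volume_preserving_symm_measurableEquiv_toLp (Fin h))
  have e2 := volume_measurePreserving_sumPiEquivProdPi_symm (fun _ : Fin k ⊕ Fin h => ℝ)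
  have e3 := volume_measurePreserving_piCongrLeft (fun _ : Fin (k+h) => ℝ) finSumFinEquiv
  have e4 := (EuclideanSpace.volume_preserving_symm_measurableEquiv_toLp (Fin (k+h))).symm
  have comp := ((e4.comp e3).comp e2).comp e1
  rw [← Measure.volume_eq_prod] at comp ⊢
  convert comp using 1
  case e'_4 => rfl
  funext p
  refine PiLp.ext fun i => ?_
  induction i using Fin.addCases with
  | left i =>
      show joinFn k h p (Fin.castAdd h i) = _
      rw [show (Fin.castAdd h i) = finSumFinEquiv (Sum.inl i) from rfl]
      simp [joinFn, MeasurableEquiv.coe_toLp, MeasurableEquiv.coe_toLp_symm, MeasurableEquiv.piCongrLeft,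
        MeasurableEquiv.sumPiEquivProdPi, Equiv.piCongrLeft_apply_apply, Equiv.piCongrLeft_apply_eq_cast,
          finSumFinEquiv_symm_apply_castAdd]
  | right j =>
      show joinFn k h p (Fin.natAdd k j) = _
      rw [show (Fin.natAdd k j) = finSumFinEquiv (Sum.inr j) from rfl]
      simp [joinFn, MeasurableEquiv.coe_toLp, MeasurableEquiv.coe_toLp_symm, MeasurableEquiv.piCongrLeft,
        MeasurableEquiv.sumPiEquivProdPi, Equiv.piCongrLeft_apply_apply, Equiv.piCongrLeft_apply_eq_cast,
          finSumFinEquiv_symm_apply_natAdd]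

theorem nX_joinFn (k h : ℕ) (p : EuclideanSpace ℝ (Fin k) × EuclideanSpace ℝ (Fin h)) :
    nX k h (joinFn k h p) = ‖p.1‖ := by
  rw [EuclideanSpace.norm_eq, nX]
  congr 1
  refine Finset.sum_congr rfl fun i _ => ?_
  rw [show joinFn k h p (Fin.castAdd h i) = p.1 i by simp [joinFn], Real.norm_eq_abs, sq_abs]

theorem nY_joinFn (k h : ℕ) (p : EuclideanSpace ℝ (Fin k) × EuclideanSpace ℝ (Fin h)) :
    nY k h (joinFn k h p) = ‖p.2‖ := by
  rw [EuclideanSpace.norm_eq, nY]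
  congr 1
  refine Finset.sum_congr rfl fun i _ => ?_
  rw [show joinFn k h p (Fin.natAdd k i) = p.2 i by simp [joinFn], Real.norm_eq_abs, sq_abs]

theorem pow_sub_pow_le (n : ℕ) (u ε : ℝ) (hε : 0 ≤ ε) (hu : ε ≤ u) :
    (u + ε) ^ (n+1) - (u - ε) ^ (n+1) ≤ 2 ^ (n+1) * ε * u ^ n := by
  induction n with
  | zero => ring_nf; nlinarith
  | succ n ih =>
      have h1 : (0:ℝ) ≤ u - ε := by linarith
      have h0 : (0:ℝ) ≤ u := le_trans hε hu
      have hup : (0:ℝ) ≤ u ^ n := pow_nonneg h0 n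
      have hpow : (u - ε) ^ (n+1) ≤ u ^ n * (u - ε) := by
        calc (u - ε) ^ (n+1) = (u - ε)^n * (u - ε) := by ring
        _ ≤ u ^ n * (u - ε) := by
            have := pow_le_pow_left₀ h1 (by linarith : u - ε ≤ u) n
            nlinarith [pow_nonneg h1 n]
      have key : (u + ε) ^ (n+2) - (u - ε) ^ (n+2)
          = (u + ε) * ((u + ε) ^ (n+1) - (u - ε) ^ (n+1)) + 2 * ε * (u - ε) ^ (n+1) := by
        ring
      have s1 : (u + ε) * ((u + ε) ^ (n+1) - (u - ε) ^ (n+1)) ≤ (u + ε) * (2 ^ (n+1) * ε * u ^ n) :=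
        mul_le_mul_of_nonneg_left ih (by linarith)
      have s2 : 2 * ε * (u - ε) ^ (n+1) ≤ 2 * ε * (u ^ n * (u - ε)) :=
        mul_le_mul_of_nonneg_left hpow (by linarith)
      have s3 : (0:ℝ) ≤ ((2:ℝ) ^ (n+1) - 2) * u ^ n * (ε * u - ε * ε) := by
        have h5 : (2:ℝ) ≤ 2 ^ (n+1) := by
          calc (2:ℝ) = 2^1 := by norm_num
          _ ≤ 2^(n+1) := pow_le_pow_right₀ (by norm_num) (by omega)
        have h4 : (0:ℝ) ≤ ε * u - ε * ε := by nlinarith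
        exact mul_nonneg (mul_nonneg (by linarith) hup) h4
      have e : 2 ^ (n+1+1) * ε * u ^ (n+1)
          - ((u + ε) * (2 ^ (n+1) * ε * u ^ n) + 2 * ε * (u ^ n * (u - ε)))
          = ((2:ℝ)^(n+1) - 2) * u^n * (ε*u - ε*ε) := by ring
      rw [key]
      linarith [s1, s2, s3, e]

theorem polar_int (h d : ℕ) (hh : 1 ≤ h) (R : ℝ) (hR : 0 < R) :
    ∫ y in Metric.ball (0 : EuclideanSpace ℝ (Fin h)) R, ‖y‖ ^ d
      = h * uball h * (R ^ (d + h) / (d + h)) := by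
  haveI : Nontrivial (EuclideanSpace ℝ (Fin h)) := by
    have : 0 < Module.finrank ℝ (EuclideanSpace ℝ (Fin h)) := by
      rw [finrank_euclideanSpace_fin]; omega
    exact Module.nontrivial_of_finrank_pos this
  have key := MeasureTheory.integral_fun_norm_addHaar
    (volume : Measure (EuclideanSpace ℝ (Fin h)))
    (Set.indicator (Set.Iio R) (fun r : ℝ => r ^ d))
  rw [finrank_euclideanSpace_fin] at key
  have lhs_eq : ∫ y in Metric.ball (0 : EuclideanSpace ℝ (Fin h)) R, ‖y‖ ^ d
      = ∫ y : EuclideanSpace ℝ (Fin h), Set.indicator (Set.Iio R) (fun r : ℝ => r ^ d) ‖y‖ := by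
    rw [← integral_indicator measurableSet_ball]
    congr 1
    funext y
    by_cases hy : y ∈ Metric.ball (0 : EuclideanSpace ℝ (Fin h)) R
    · rw [Set.indicator_of_mem hy,
        Set.indicator_of_mem (show ‖y‖ ∈ Set.Iio R from mem_ball_zero_iff.mp hy)]
    · rw [Set.indicator_of_notMem hy, Set.indicator_of_notMem]
      rw [mem_ball_zero_iff] at hy
      simpa using hy
  rw [lhs_eq, key]
  have inner : ∫ r in Set.Ioi (0:ℝ),
        r ^ (h - 1) • Set.indicator (Set.Iio R) (fun r : ℝ => r ^ d) r
      = R ^ (d + h) / (d + h) := by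
    have e1 : ∀ r : ℝ, r ^ (h - 1) • Set.indicator (Set.Iio R) (fun r : ℝ => r ^ d) r
        = Set.indicator (Set.Iio R) (fun r : ℝ => r ^ (h - 1 + d)) r := by
      intro r
      by_cases hr : r ∈ Set.Iio R
      · rw [Set.indicator_of_mem hr, Set.indicator_of_mem hr, smul_eq_mul, ← pow_add]
      · rw [Set.indicator_of_notMem hr, Set.indicator_of_notMem hr, smul_zero]
    simp_rw [e1]
    rw [setIntegral_indicator measurableSet_Iio]
    rw [show Set.Ioi (0:ℝ) ∩ Set.Iio R = Set.Ioo 0 R from Set.Ioi_inter_Iio]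
    rw [← MeasureTheory.integral_Ioc_eq_integral_Ioo, ← intervalIntegral.integral_of_le hR.le,
      integral_pow]
    rw [show h - 1 + d + 1 = d + h from by omega]
    have e2 : ((h - 1 + d : ℕ) : ℝ) + 1 = (d : ℝ) + h := by
      push_cast [Nat.cast_sub hh]; ring
    rw [e2, zero_pow (by omega : d + h ≠ 0), sub_zero]
  rw [inner, nsmul_eq_mul, smul_eq_mul, uball, measureReal_def]
  ring

theorem polar_lint (h d : ℕ) (hh : 1 ≤ h) (R : ℝ) (hR : 0 < R) :
    ∫⁻ y in Metric.ball (0 : EuclideanSpace ℝ (Fin h)) R, ENNReal.ofReal (‖y‖ ^ d)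
      = ENNReal.ofReal (h * uball h * (R ^ (d + h) / (d + h))) := by
  rw [← polar_int h d hh R hR]
  refine (MeasureTheory.ofReal_integral_eq_lintegral_ofReal ?_ ?_).symm
  · exact ((continuous_norm.pow d).continuousOn.integrableOn_compact
      (isCompact_closedBall (0 : EuclideanSpace ℝ (Fin h)) R)).mono_set
      Metric.ball_subset_closedBall
  · exact Filter.Eventually.of_forall fun y => by positivity

theorem ball_vol (j : ℕ) (hj : 1 ≤ j) {r : ℝ} (hr : 0 ≤ r) :
    volume (Metric.ball (0 : EuclideanSpace ℝ (Fin j)) r)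
      = ENNReal.ofReal (r ^ j * uball j) := by
  haveI : Nontrivial (EuclideanSpace ℝ (Fin j)) := by
    have : 0 < Module.finrank ℝ (EuclideanSpace ℝ (Fin j)) := by
      rw [finrank_euclideanSpace_fin]; omega
    exact Module.nontrivial_of_finrank_pos this
  rw [Measure.addHaar_ball volume _ hr, finrank_euclideanSpace_fin,
    ENNReal.ofReal_mul (pow_nonneg hr _), uball,
    ENNReal.ofReal_toReal measure_ball_lt_top.ne]

theorem sqrt_pow_eq {x : ℝ} (hx : 0 ≤ x) (n : ℕ) :
    Real.sqrt x ^ n = x ^ ((n : ℝ) / 2) := by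
  rw [Real.sqrt_eq_rpow, ← Real.rpow_natCast (x ^ ((1:ℝ)/2)) n, ← Real.rpow_mul hx]
  norm_num
  rw [mul_comm, mul_one_div]

set_option maxHeartbeats 2000000

theorem final_le (k h : ℕ) (hk : 2 ≤ k) (hh : 2 ≤ h) (a b ε R uk uh : ℝ)
    (hb : 0 < b) (hm : (0:ℝ) < (k:ℝ) + h - 1) :
    (2*a*ε)^k * uk * ((b*ε)^h * uh)
      + (2^k * ε * a^k / b^(k-1) * uk) * (h * uh * (R^((k-1)+h)/(((k-1:ℕ):ℝ)+(h:ℝ))))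
    = 2^k * uk * uh * a^k * b^h * ε *
        (ε^(k+h-1) + h*R^(k+h-1)/(b^(k+h-1) * ((k:ℝ)+h-1))) := by
  obtain ⟨K, rfl⟩ : ∃ K, k = K+2 := ⟨k-2, by omega⟩
  obtain ⟨H, rfl⟩ : ∃ H, h = H+2 := ⟨h-2, by omega⟩
  rw [show K+2-1 = K+1 from by omega, show (K+2)+(H+2)-1 = K+H+3 from by omega,
      show (K+1)+(H+2) = K+H+3 from by omega]
  have hb' : b ^ (K+1) ≠ 0 := by positivity
  have hbKH : b ^ (K+H+3) ≠ 0 := by positivity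
  push_cast
  have hd1 : (K:ℝ)+1+(H+2) ≠ 0 := by positivity
  have hd2 : (K:ℝ)+2+(H+2)-1 ≠ 0 := by
    nlinarith [Nat.cast_nonneg (α := ℝ) K, Nat.cast_nonneg (α := ℝ) H]
  field_simp
  ring

/-- The volume estimate for the `ε`-slab around the Lawson cone inside `H_R`
(Section 2.3 of the paper). -/
theorem stmt12 (k h : ℕ) (hk : 2 ≤ k) (hh : 2 ≤ h) (R ε : ℝ) (hR : 0 < R) (hε : 0 < ε) :
    volume {z | z ∈ Hset k h R ∧ pfun k h z < ε} ≤
      ENNReal.ofReal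
        (2 ^ k * uball k * uball h * ((k : ℝ) - 1) ^ ((k : ℝ) / 2) *
          ((h : ℝ) - 1) ^ ((h : ℝ) / 2) * ε *
          (ε ^ (k + h - 1)
            + h * R ^ (k + h - 1)
                / (((h : ℝ) - 1) ^ (((k : ℝ) + h - 1) / 2) * ((k : ℝ) + h - 1)))) := by
  have hk1 : (1:ℝ) ≤ (k:ℝ) - 1 := by
    have : (2:ℝ) ≤ (k:ℝ) := by exact_mod_cast hk
    linarith
  have hh1 : (1:ℝ) ≤ (h:ℝ) - 1 := by
    have : (2:ℝ) ≤ (h:ℝ) := by exact_mod_cast hh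
    linarith
  set a : ℝ := Real.sqrt ((k:ℝ) - 1) with ha_def
  set b : ℝ := Real.sqrt ((h:ℝ) - 1) with hb_def
  have ha1 : 1 ≤ a := by
    calc (1:ℝ) = Real.sqrt 1 := Real.sqrt_one.symm
    _ ≤ a := Real.sqrt_le_sqrt hk1
  have hb1 : 1 ≤ b := by
    calc (1:ℝ) = Real.sqrt 1 := Real.sqrt_one.symm
    _ ≤ b := Real.sqrt_le_sqrt hh1
  have ha0 : 0 < a := lt_of_lt_of_le one_pos ha1
  have hb0 : 0 < b := lt_of_lt_of_le one_pos hb1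
  have huk : 0 ≤ uball k := ENNReal.toReal_nonneg
  have huh : 0 ≤ uball h := ENNReal.toReal_nonneg
  -- measurability of the slab
  have hcX : Continuous (nX k h) := by
    apply Real.continuous_sqrt.comp
    exact continuous_finset_sum _ fun i _ =>
      ((EuclideanSpace.proj (Fin.castAdd h i)).continuous).pow 2
  have hcY : Continuous (nY k h) := by
    apply Real.continuous_sqrt.comp
    exact continuous_finset_sum _ fun j _ =>
      ((EuclideanSpace.proj (Fin.natAdd k j)).continuous).pow 2
  have hmX : Measurable (nX k h) := hcX.measurable
  have hmY : Measurable (nY k h) := hcY.measurable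
  have hMS : MeasurableSet {z | z ∈ Hset k h R ∧ pfun k h z < ε} := by
    have e : {z | z ∈ Hset k h R ∧ pfun k h z < ε}
        = ({z | nX k h z < R} ∩ {z | nY k h z < R}) ∩ {z | pfun k h z < ε} := by
      ext z
      simp only [Set.mem_setOf_eq, Set.mem_inter_iff, Hset]
      try tauto
    rw [e]
    refine MeasurableSet.inter (MeasurableSet.inter ?_ ?_) ?_
    · exact measurableSet_lt hmX measurable_const
    · exact measurableSet_lt hmY measurable_const
    · exact measurableSet_lt (((hmX.div_const _).sub (hmY.div_const _)).abs) measurable_const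
  rw [← (joinFn_mp k h).measure_preimage hMS.nullMeasurableSet]
  set T1 : Set (EuclideanSpace ℝ (Fin k) × EuclideanSpace ℝ (Fin h)) := Metric.ball 0 (2*a*ε) ×ˢ Metric.ball 0 (b*ε) with hT1
  set T2 : Set (EuclideanSpace ℝ (Fin k) × EuclideanSpace ℝ (Fin h)) := {p | b*ε ≤ ‖p.2‖ ∧ ‖p.2‖ < R ∧
      a*(‖p.2‖/b - ε) ≤ ‖p.1‖ ∧ ‖p.1‖ < a*(‖p.2‖/b + ε)} with hT2
  have hsub : joinFn k h ⁻¹' {z | z ∈ Hset k h R ∧ pfun k h z < ε} ⊆ T1 ∪ T2 := by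
    rintro p hp
    simp only [Set.mem_preimage, Set.mem_setOf_eq, Hset, pfun, nX_joinFn, nY_joinFn,
      ← ha_def, ← hb_def] at hp
    obtain ⟨⟨h1, h2⟩, h3⟩ := hp
    rw [abs_lt] at h3
    obtain ⟨h3l, h3r⟩ := h3
    by_cases hcase : ‖p.2‖ < b*ε
    · left
      rw [hT1, Set.mem_prod, mem_ball_zero_iff, mem_ball_zero_iff]
      constructor
      · have hyb : ‖p.2‖/b < ε := by rw [div_lt_iff₀ hb0]; nlinarith
        have hxa : ‖p.1‖/a < 2*ε := by nlinarith
        rw [div_lt_iff₀ ha0] at hxa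
        nlinarith
      · exact hcase
    · right
      rw [hT2, Set.mem_setOf_eq]
      refine ⟨not_lt.mp hcase, h2, ?_, ?_⟩
      · have : ‖p.2‖/b - ε < ‖p.1‖/a := by linarith
        have := (lt_div_iff₀ ha0).mp this
        nlinarith
      · have : ‖p.1‖/a < ‖p.2‖/b + ε := by linarith
        have := (div_lt_iff₀ ha0).mp this
        nlinarith
  refine le_trans (measure_mono hsub) (le_trans (measure_union_le T1 T2) ?_)
  have hvT1 : (volume.prod volume) T1
      = ENNReal.ofReal ((2*a*ε)^k * uball k * ((b*ε)^h * uball h)) := by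
    rw [hT1, Measure.prod_prod, ball_vol k (by omega) (by positivity),
      ball_vol h (by omega) (by positivity), ← ENNReal.ofReal_mul]
    exact mul_nonneg (by positivity) huk
  have hT2m : MeasurableSet T2 := by
    have hn2 : Measurable fun p : EuclideanSpace ℝ (Fin k) × EuclideanSpace ℝ (Fin h) => ‖p.2‖ := measurable_snd.norm
    have hn1 : Measurable fun p : EuclideanSpace ℝ (Fin k) × EuclideanSpace ℝ (Fin h) => ‖p.1‖ := measurable_fst.norm
    rw [hT2]
    simp only [Set.setOf_and]
    refine MeasurableSet.inter (measurableSet_le measurable_const hn2)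
      (MeasurableSet.inter (measurableSet_lt hn2 measurable_const)
        (MeasurableSet.inter ?_ ?_))
    · exact measurableSet_le (((hn2.div_const b).sub_const ε).const_mul a) hn1
    · exact measurableSet_lt hn1 (((hn2.div_const b).add_const ε).const_mul a)
  set Dk : ℝ := 2^k * ε * a^k / b^(k-1) * uball k with hDk
  have hDk0 : 0 ≤ Dk := by positivity
  have hsec : ∀ y : EuclideanSpace ℝ (Fin h), volume ((fun x => (x, y)) ⁻¹' T2)
      ≤ (Metric.ball (0:EuclideanSpace ℝ (Fin h)) R).indicator
          (fun y => ENNReal.ofReal (Dk * ‖y‖^(k-1))) y := by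
    intro y
    by_cases hyR : y ∈ Metric.ball (0:EuclideanSpace ℝ (Fin h)) R
    · rw [Set.indicator_of_mem hyR]
      by_cases hys : b*ε ≤ ‖y‖
      · set s := ‖y‖ with hs_def
        have hu : ε ≤ s/b := (le_div_iff₀ hb0).mpr (by nlinarith)
        have ht10 : 0 ≤ a*(s/b - ε) := mul_nonneg ha0.le (by linarith)
        have ht12 : a*(s/b - ε) ≤ a*(s/b + ε) := by nlinarith
        have hsub2 : ((fun x => (x, y)) ⁻¹' T2)
            ⊆ Metric.ball (0:EuclideanSpace ℝ (Fin k)) (a*(s/b + ε)) \ Metric.ball (0:EuclideanSpace ℝ (Fin k)) (a*(s/b - ε)) := by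
          intro x hx
          simp only [Set.mem_preimage, hT2, Set.mem_setOf_eq] at hx
          refine ⟨mem_ball_zero_iff.mpr hx.2.2.2, fun hmem => ?_⟩
          rw [mem_ball_zero_iff] at hmem
          exact absurd hx.2.2.1 (not_le.mpr hmem)
        refine le_trans (measure_mono hsub2) ?_
        rw [measure_diff (Metric.ball_subset_ball ht12)
          measurableSet_ball.nullMeasurableSet measure_ball_lt_top.ne,
          ball_vol k (by omega) (le_trans ht10 ht12), ball_vol k (by omega) ht10,
          ← ENNReal.ofReal_sub _ (by positivity)]
        apply ENNReal.ofReal_le_ofReal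
        have hkey := pow_sub_pow_le (k-1) (s/b) ε hε.le hu
        rw [show k - 1 + 1 = k from by omega] at hkey
        have step : (a*(s/b + ε))^k - (a*(s/b - ε))^k ≤ a^k * (2^k * ε * (s/b)^(k-1)) := by
          have expand : (a*(s/b + ε))^k - (a*(s/b - ε))^k
              = a^k * ((s/b + ε)^k - (s/b - ε)^k) := by
            rw [mul_pow, mul_pow]; ring
          rw [expand]
          exact mul_le_mul_of_nonneg_left hkey (by positivity)
        calc (a*(s/b + ε))^k * uball k - (a*(s/b - ε))^k * uball k
            = ((a*(s/b + ε))^k - (a*(s/b - ε))^k) * uball k := by ring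
          _ ≤ (a^k * (2^k * ε * (s/b)^(k-1))) * uball k :=
              mul_le_mul_of_nonneg_right step huk
          _ = Dk * s^(k-1) := by rw [hDk, div_pow]; ring
      · have hemp : ((fun x => (x, y)) ⁻¹' T2) = ∅ := by
          ext x
          simp only [Set.mem_preimage, hT2, Set.mem_setOf_eq, Set.mem_empty_iff_false,
            iff_false, not_and]
          intro hc
          exact absurd hc hys
        rw [hemp, measure_empty]
        exact zero_le
    · rw [Set.indicator_of_notMem hyR]
      have hemp : ((fun x => (x, y)) ⁻¹' T2) = ∅ := by
        rw [mem_ball_zero_iff, not_lt] at hyR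
        ext x
        simp only [Set.mem_preimage, hT2, Set.mem_setOf_eq, Set.mem_empty_iff_false,
          iff_false, not_and]
        intro _ hc
        exact absurd hc (not_lt.mpr hyR)
      rw [hemp, measure_empty]
  have hvT2 : (volume.prod volume) T2
      ≤ ENNReal.ofReal (Dk * (h * uball h * (R^((k-1)+h)/(((k-1:ℕ):ℝ)+(h:ℝ))))) := by
    rw [Measure.prod_apply_symm hT2m]
    calc ∫⁻ y, volume ((fun x => (x, y)) ⁻¹' T2)
        ≤ ∫⁻ y, (Metric.ball (0:EuclideanSpace ℝ (Fin h)) R).indicator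
            (fun y => ENNReal.ofReal (Dk * ‖y‖^(k-1))) y := lintegral_mono hsec
      _ = ∫⁻ y in Metric.ball (0:EuclideanSpace ℝ (Fin h)) R, ENNReal.ofReal (Dk * ‖y‖^(k-1)) := by
          rw [lintegral_indicator measurableSet_ball]
      _ = ENNReal.ofReal Dk * ∫⁻ y in Metric.ball (0:EuclideanSpace ℝ (Fin h)) R, ENNReal.ofReal (‖y‖^(k-1)) := by
          simp_rw [ENNReal.ofReal_mul hDk0]
          rw [lintegral_const_mul' _ _ ENNReal.ofReal_ne_top]
      _ = ENNReal.ofReal Dk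
            * ENNReal.ofReal (h * uball h * (R^((k-1)+h)/(((k-1):ℕ)+(h:ℝ)))) := by
          rw [polar_lint h (k-1) (by omega) R hR]
      _ = ENNReal.ofReal (Dk * (h * uball h * (R^((k-1)+h)/(((k-1:ℕ):ℝ)+(h:ℝ))))) :=
          (ENNReal.ofReal_mul hDk0).symm
  refine le_trans (add_le_add hvT1.le hvT2) ?_
  rw [← ENNReal.ofReal_add (mul_nonneg (mul_nonneg (by positivity) huk)
    (mul_nonneg (by positivity) huh)) ?_]
  swap
  · have : (0:ℝ) ≤ h * uball h * (R^((k-1)+h)/(((k-1:ℕ):ℝ)+(h:ℝ))) := by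
      have : (0:ℝ) < (((k-1:ℕ):ℝ)+(h:ℝ)) := by positivity
      positivity
    exact mul_nonneg hDk0 this
  apply ENNReal.ofReal_le_ofReal
  have hA : ((k:ℝ) - 1) ^ ((k:ℝ) / 2) = a^k := (sqrt_pow_eq (by linarith) k).symm
  have hB : ((h:ℝ) - 1) ^ ((h:ℝ) / 2) = b^h := (sqrt_pow_eq (by linarith) h).symm
  have hB' : ((h:ℝ) - 1) ^ (((k:ℝ) + h - 1) / 2) = b^(k+h-1) := by
    have e : ((k:ℝ) + h - 1) = ((k + h - 1 : ℕ) : ℝ) := by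
      rw [Nat.cast_sub (by omega : 1 ≤ k + h)]
      push_cast; ring
    rw [e, (sqrt_pow_eq (by linarith) (k+h-1)).symm]
  rw [hA, hB, hB']
  have hm : (0:ℝ) < (k:ℝ) + h - 1 := by
    have : (2:ℝ) ≤ (k:ℝ) := by exact_mod_cast hk
    have : (0:ℝ) ≤ (h:ℝ) := Nat.cast_nonneg h
    linarith
  rw [hDk]
  exact le_of_eq (final_le k h hk hh a b ε R (uball k) (uball h) hb0 hm)
end
end
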